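/- For all natural numbers m, n, the double sum over integers k, ℓ of binom(2m, m+k) * binom(2n, n+ℓ) * |k^2 - ℓ^2| is greater than or equal to 2*m*n*binom(2m, m)*binom(2n, n), with equality if and only if m = n. -/

import Mathlib

/-- Binomial coefficient `n.choose k` extended to an integer lower index,
vanishing when `k < 0` (and, as usual, when `k > n`). -/
def ichoose (n : ℕ) (k : ℤ) : ℤ := if 0 ≤ k then (n.choose k.toNat : ℤ) else 0

open Finset

def cZ (m i : ℕ) : ℤ := ((2*m).choose i : ℤ)
def Tt (m p : ℕ) : ℤ := ∑ i ∈ Ico (m+p) (2*m+1), cZ m i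
def Qsum (m n : ℕ) : ℤ := ∑ q ∈ range (max m n), (2*(q:ℤ)+1) * Tt m (q+1) * Tt n (q+1)
def Ssum (m n : ℕ) : ℤ := ∑ i ∈ range (2*m+1), ∑ j ∈ range (2*n+1),
    cZ m i * cZ n j * |((i:ℤ)-m)^2 - ((j:ℤ)-n)^2|

lemma Tt_eq_zero {m p : ℕ} (h : m + 1 ≤ p) : Tt m p = 0 := by
  unfold Tt
  rw [Finset.Ico_eq_empty (by omega), sum_empty]

lemma Tt_succ {m p : ℕ} (h : p ≤ m) : Tt m p = cZ m (m+p) + Tt m (p+1) := by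
  unfold Tt
  rw [Finset.sum_eq_sum_Ico_succ_bot (by omega), ← Nat.add_assoc]

lemma cZ_eq_zero {m i : ℕ} (h : 2*m < i) : cZ m i = 0 := by
  simp [cZ, Nat.choose_eq_zero_of_lt h]

/-- absorption identity in ℤ: (m+p+1) C(2m, m+p+1) = (m-p) C(2m, m+p), valid for all p. -/
lemma absorb (m p : ℕ) : ((m:ℤ)+p+1) * cZ m (m+p+1) = ((m:ℤ)-p) * cZ m (m+p) := by
  rcases le_or_gt p m with hp | hp
  · have h := Nat.choose_succ_right_eq (2*m) (m+p)
    have h2 : 2*m - (m+p) = m - p := by omega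
    rw [h2] at h
    have h3 := congrArg (Nat.cast (R := ℤ)) h
    push_cast [Nat.cast_sub hp] at h3
    unfold cZ
    push_cast
    linear_combination h3
  · rw [cZ_eq_zero (by omega), cZ_eq_zero (by omega), mul_zero, mul_zero]

lemma Tt_succ' (m p : ℕ) : Tt m p = cZ m (m+p) + Tt m (p+1) := by
  rcases le_or_gt p m with h | h
  · exact Tt_succ h
  · rw [Tt_eq_zero (by omega), Tt_eq_zero (by omega), cZ_eq_zero (by omega)]
    ring

lemma row_sum (m : ℕ) : ∑ i ∈ range (2*m+1), cZ m i = 4^m := by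
  have h := congrArg (Nat.cast (R := ℤ)) (Nat.sum_range_choose (2*m))
  push_cast at h
  unfold cZ
  rw [h, (by norm_num : (4:ℤ) = 2^2), ← pow_mul, Nat.mul_comm]

/-- reflection: lower partial sum equals tail sum -/
lemma low_sum (m q : ℕ) : ∑ i ∈ range (m - q), cZ m i = Tt m (q+1) := by
  unfold Tt
  rw [range_eq_Ico]
  refine Finset.sum_nbij' (fun i => 2*m - i) (fun i => 2*m - i) ?_ ?_ ?_ ?_ ?_
  · intro a ha; simp only [mem_Ico] at *; omega
  · intro a ha; simp only [mem_Ico] at *; omega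
  · intro a ha; simp only [mem_Ico] at ha; omega
  · intro a ha; simp only [mem_Ico] at ha; omega
  · intro a ha; simp only [mem_Ico] at ha
    unfold cZ
    rw [Nat.choose_symm (by omega)]

lemma central (m : ℕ) : 2 * Tt m 1 + cZ m m = 4^m := by
  have h1 : ∑ i ∈ range (2*m+1), cZ m i = ∑ i ∈ Ico 0 m, cZ m i + ∑ i ∈ Ico m (2*m+1), cZ m i := by
    rw [range_eq_Ico,
      (Finset.sum_Ico_consecutive (fun i => cZ m i) (show 0 ≤ m by omega)
        (show m ≤ 2*m+1 by omega)).symm]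
  have h2 : ∑ i ∈ Ico 0 m, cZ m i = Tt m 1 := by
    rw [← range_eq_Ico] at *
    have := low_sum m 0
    simpa using this
  have h3 : (∑ i ∈ Ico m (2*m+1), cZ m i) = Tt m 0 := by
    unfold Tt; simp
  have h4 : Tt m 0 = cZ m m + Tt m 1 := by
    unfold Tt
    rw [Finset.sum_eq_sum_Ico_succ_bot (by omega)]
    norm_num
  rw [row_sum] at h1
  omega

lemma sum_odds (a : ℕ) : ∑ q ∈ range a, (2*(q:ℤ)+1) = (a:ℤ)^2 := by
  induction a with
  | zero => simp
  | succ k ih => rw [Finset.sum_range_succ, ih]; push_cast; ring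

lemma sq_from_levels {a N : ℕ} (h : a ≤ N) :
    ((a:ℤ))^2 = ∑ q ∈ range N, (if q < a then (2*(q:ℤ)+1) else 0) := by
  rw [← Finset.sum_subset (Finset.range_subset_range.2 h)
      (fun q _ hq => if_neg (by simp at hq ⊢; omega))]
  rw [Finset.sum_congr rfl (fun q hq => if_pos (mem_range.1 hq)), sum_odds]

lemma ind_row (m q : ℕ) :
    ∑ i ∈ range (2*m+1), (if q < ((i:ℤ) - m).natAbs then cZ m i else 0)
      = 2 * Tt m (q+1) := by
  rw [← Finset.sum_filter]
  have hfilter : filter (fun (i : ℕ) => q < ((i:ℤ) - m).natAbs) (range (2*m+1))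
      = Ico 0 (m-q) ∪ Ico (m+q+1) (2*m+1) := by
    ext i
    simp only [mem_filter, mem_range, mem_Ico, mem_union]
    omega
  have hdisj : Disjoint (Ico 0 (m-q)) (Ico (m+q+1) (2*m+1)) := by
    rw [Finset.disjoint_left]
    intro a ha hb
    simp only [mem_Ico] at ha hb
    omega
  rw [hfilter, Finset.sum_union hdisj, ← range_eq_Ico, low_sum]
  have h2 : ∑ i ∈ Ico (m+q+1) (2*m+1), cZ m i = Tt m (q+1) := by
    unfold Tt
    rw [show m+(q+1) = m+q+1 from by omega]
  rw [h2]
  ring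

lemma min_sq_natAbs (x y : ℤ) :
    min (x^2) (y^2) = (((min x.natAbs y.natAbs : ℕ)):ℤ)^2 := by
  have hx : x^2 = ((x.natAbs:ℤ))^2 := by rw [← sq_abs, Int.abs_eq_natAbs]
  have hy : y^2 = ((y.natAbs:ℤ))^2 := by rw [← sq_abs, Int.abs_eq_natAbs]
  rw [hx, hy]
  rcases le_total x.natAbs y.natAbs with h | h
  · rw [Nat.min_eq_left h, min_eq_left]
    exact_mod_cast Nat.pow_le_pow_left h 2
  · rw [Nat.min_eq_right h, min_eq_right]
    exact_mod_cast Nat.pow_le_pow_left h 2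

lemma abs_sq_diff (x y : ℤ) : |x^2 - y^2| = x^2 + y^2 - 2 * min (x^2) (y^2) := by
  rcases le_total (x^2) (y^2) with h | h
  · rw [abs_of_nonpos (by omega), min_eq_left h]; ring
  · rw [abs_of_nonneg (by omega), min_eq_right h]; ring

/-- antidifference for the first moment identity -/
def uF (m p : ℕ) : ℤ :=
  (2*(m:ℤ) - 4*(p:ℤ)^2) * Tt m (p+1) + (2*(p:ℤ)+1)*((m:ℤ)+(p:ℤ)+1) * cZ m (m+p+1)

lemma uF_diff (m p : ℕ) : uF m p - uF m (p+1) = 4*(2*(p:ℤ)+1) * Tt m (p+1) := by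
  have h1 : Tt m (p+1) = cZ m (m+p+1) + Tt m (p+2) := by
    have := Tt_succ' m (p+1)
    simpa [show m+(p+1) = m+p+1 from by omega, show (p+1)+1 = p+2 from by omega] using this
  have h2 : ((m:ℤ)+(p+1)+1) * cZ m (m+p+2) = ((m:ℤ)-(p+1)) * cZ m (m+p+1) := by
    have := absorb m (p+1)
    simpa [show m+(p+1)+1 = m+p+2 from by omega, show m+(p+1) = m+p+1 from by omega,
      show m+p+1+1 = m+p+2 from by omega] using this
  unfold uF
  simp only [show m+(p+1)+1 = m+p+2 from by omega, show (p+1)+1 = p+2 from by omega]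
  push_cast
  linear_combination (2*(m:ℤ) - 4*((p:ℤ)+1)^2) * h1 - (2*(p:ℤ)+3) * h2

lemma P1 (m : ℕ) : ∑ p ∈ range m, 4*(2*(p:ℤ)+1) * Tt m (p+1) = (m:ℤ) * 4^m := by
  have tele : ∑ p ∈ range m, (uF m p - uF m (p+1)) = uF m 0 - uF m m :=
    Finset.sum_range_sub' (uF m) m
  have hzero : uF m m = 0 := by
    unfold uF
    rw [Tt_eq_zero (by omega), cZ_eq_zero (by omega)]
    ring
  have h0 : uF m 0 = (m:ℤ) * 4^m := by
    unfold uF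
    have habs : ((m:ℤ)+0+1) * cZ m (m+0+1) = ((m:ℤ)-0) * cZ m (m+0) := absorb m 0
    simp only [Nat.add_zero, Nat.zero_add] at habs ⊢
    have hc := central m
    push_cast at habs ⊢
    linear_combination habs + (m:ℤ) * hc
  calc ∑ p ∈ range m, 4*(2*(p:ℤ)+1) * Tt m (p+1)
      = ∑ p ∈ range m, (uF m p - uF m (p+1)) := by
        refine Finset.sum_congr rfl fun p _ => ?_
        rw [uF_diff]
    _ = (m:ℤ) * 4^m := by rw [tele, hzero, h0]; ring

/-- antidifference for the squared-tail identity -/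
def wF (m p : ℕ) : ℤ :=
  4*(m:ℤ)^2*(Tt m (p+1))^2 + 4*(m:ℤ)*(2*(p:ℤ)+1)*((m:ℤ)+(p:ℤ)+1) * cZ m (m+p+1) * Tt m (p+1)
  - (2*(m:ℤ)-1)*((m:ℤ)+(p:ℤ)+1)^2*(cZ m (m+p+1))^2 - 8*(m:ℤ)*(p:ℤ)^2*(Tt m (p+1))^2

lemma wF_diff (m p : ℕ) :
    wF m p - wF m (p+1) = 8*(m:ℤ)*(2*(p:ℤ)+1) * (Tt m (p+1))^2 := by
  have h1 : Tt m (p+1) = cZ m (m+p+1) + Tt m (p+2) := by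
    have := Tt_succ' m (p+1)
    simpa [show m+(p+1) = m+p+1 from by omega, show (p+1)+1 = p+2 from by omega] using this
  have h2 : ((m:ℤ)+(p+1)+1) * cZ m (m+p+2) = ((m:ℤ)-(p+1)) * cZ m (m+p+1) := by
    have := absorb m (p+1)
    simpa [show m+(p+1)+1 = m+p+2 from by omega, show m+(p+1) = m+p+1 from by omega,
      show m+p+1+1 = m+p+2 from by omega] using this
  unfold wF
  simp only [show m+(p+1)+1 = m+p+2 from by omega, show (p+1)+1 = p+2 from by omega]
  push_cast
  rw [h1]
  linear_combination ((2*(m:ℤ)-1)*(((m:ℤ)+(p:ℤ)+2) * cZ m (m+p+2) + ((m:ℤ)-(p:ℤ)-1) * cZ m (m+p+1))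
    - 4*(m:ℤ)*(2*(p:ℤ)+3)*Tt m (p+2)) * h2

lemma P2 (m : ℕ) :
    8*(m:ℤ) * ∑ p ∈ range m, (2*(p:ℤ)+1) * (Tt m (p+1))^2
      = (m:ℤ)^2 * (16^m - 2*(m:ℤ)*(cZ m m)^2) := by
  have tele : ∑ p ∈ range m, (wF m p - wF m (p+1)) = wF m 0 - wF m m :=
    Finset.sum_range_sub' (wF m) m
  have hzero : wF m m = 0 := by
    unfold wF
    rw [Tt_eq_zero (by omega), cZ_eq_zero (by omega)]
    ring
  have h0 : wF m 0 = (m:ℤ)^2 * (16^m - 2*(m:ℤ)*(cZ m m)^2) := by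
    unfold wF
    have habs : ((m:ℤ)+0+1) * cZ m (m+0+1) = ((m:ℤ)-0) * cZ m (m+0) := absorb m 0
    simp only [Nat.add_zero, Nat.zero_add] at habs ⊢
    have hc := central m
    have h16 : (16:ℤ)^m = (2 * Tt m 1 + cZ m m)^2 := by
      rw [hc, ← pow_mul, (by norm_num : (16:ℤ) = 4^2), ← pow_mul, Nat.mul_comm]
    push_cast at habs ⊢
    rw [h16]
    linear_combination (4*(m:ℤ)*Tt m 1 - (2*(m:ℤ)-1)*(((m:ℤ)+1)*cZ m (m+1) + (m:ℤ)*cZ m m)) * habs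
  calc 8*(m:ℤ) * ∑ p ∈ range m, (2*(p:ℤ)+1) * (Tt m (p+1))^2
      = ∑ p ∈ range m, (wF m p - wF m (p+1)) := by
        rw [Finset.mul_sum]
        refine Finset.sum_congr rfl fun p _ => ?_
        rw [wF_diff]; ring
    _ = (m:ℤ)^2 * (16^m - 2*(m:ℤ)*(cZ m m)^2) := by rw [tele, hzero, h0]; ring

lemma natAbs_le {m i : ℕ} (h : i ∈ range (2*m+1)) : ((i:ℤ) - m).natAbs ≤ m := by
  simp only [mem_range] at h
  omega

lemma sq_natAbs (x : ℤ) : x^2 = ((x.natAbs:ℤ))^2 := by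
  rw [← sq_abs, Int.abs_eq_natAbs]

/-- level sums extension -/
lemma P1ext (m N : ℕ) (h : m ≤ N) :
    ∑ p ∈ range N, 4*(2*(p:ℤ)+1) * Tt m (p+1) = (m:ℤ) * 4^m := by
  rw [← P1 m]
  apply (Finset.sum_subset (Finset.range_subset_range.2 h) ?_).symm
  intro q _ hq
  simp only [mem_range, not_lt] at hq
  rw [Tt_eq_zero (by omega)]
  ring

/-- second moment -/
lemma mom2 (m : ℕ) :
    2 * ∑ i ∈ range (2*m+1), cZ m i * ((i:ℤ) - m)^2 = (m:ℤ) * 4^m := by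
  have key : ∑ i ∈ range (2*m+1), cZ m i * ((i:ℤ) - m)^2
      = ∑ p ∈ range m, 2*(2*(p:ℤ)+1) * Tt m (p+1) := by
    have point : ∀ i ∈ range (2*m+1), cZ m i * ((i:ℤ) - m)^2
        = ∑ q ∈ range m, (2*(q:ℤ)+1) * (if q < ((i:ℤ) - m).natAbs then cZ m i else 0) := by
      intro i hi
      rw [sq_natAbs ((i:ℤ) - m), sq_from_levels (natAbs_le hi), Finset.mul_sum]
      refine Finset.sum_congr rfl fun q _ => ?_
      split_ifs <;> ring
    rw [Finset.sum_congr rfl point, Finset.sum_comm]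
    refine Finset.sum_congr rfl fun q _ => ?_
    rw [← Finset.mul_sum, ind_row]
    ring
  rw [key, Finset.mul_sum, ← P1 m]
  refine Finset.sum_congr rfl fun q _ => ?_
  ring

/-- the min double sum -/
lemma tmin (m n : ℕ) :
    ∑ i ∈ range (2*m+1), ∑ j ∈ range (2*n+1),
        cZ m i * cZ n j * min (((i:ℤ)-m)^2) (((j:ℤ)-n)^2) = 4 * Qsum m n := by
  set N := max m n with hN
  have point : ∀ i ∈ range (2*m+1), ∀ j ∈ range (2*n+1),
      cZ m i * cZ n j * min (((i:ℤ)-m)^2) (((j:ℤ)-n)^2)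
      = ∑ q ∈ range N, (2*(q:ℤ)+1) * (if q < ((i:ℤ) - m).natAbs then cZ m i else 0)
          * (if q < ((j:ℤ) - n).natAbs then cZ n j else 0) := by
    intro i hi j hj
    rw [min_sq_natAbs, sq_from_levels (show min ((i:ℤ)-m).natAbs ((j:ℤ)-n).natAbs ≤ N from
      le_trans (le_trans (Nat.min_le_left _ _) (natAbs_le hi)) (le_max_left m n)),
      Finset.mul_sum]
    refine Finset.sum_congr rfl fun q _ => ?_
    by_cases h1 : q < ((i:ℤ) - m).natAbs <;> by_cases h2 : q < ((j:ℤ) - n).natAbs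
    · rw [if_pos h1, if_pos h2, if_pos (lt_min_iff.2 ⟨h1, h2⟩)]; ring
    · rw [if_pos h1, if_neg h2, if_neg (fun hc => h2 (lt_min_iff.1 hc).2)]; ring
    · rw [if_neg h1, if_pos h2, if_neg (fun hc => h1 (lt_min_iff.1 hc).1)]; ring
    · rw [if_neg h1, if_neg h2, if_neg (fun hc => h1 (lt_min_iff.1 hc).1)]; ring
  calc ∑ i ∈ range (2*m+1), ∑ j ∈ range (2*n+1),
        cZ m i * cZ n j * min (((i:ℤ)-m)^2) (((j:ℤ)-n)^2)
      = ∑ i ∈ range (2*m+1), ∑ j ∈ range (2*n+1), ∑ q ∈ range N,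
          (2*(q:ℤ)+1) * (if q < ((i:ℤ) - m).natAbs then cZ m i else 0)
          * (if q < ((j:ℤ) - n).natAbs then cZ n j else 0) := by
        refine Finset.sum_congr rfl fun i hi => Finset.sum_congr rfl fun j hj => ?_
        exact point i hi j hj
    _ = ∑ i ∈ range (2*m+1), ∑ q ∈ range N, ∑ j ∈ range (2*n+1),
          (2*(q:ℤ)+1) * (if q < ((i:ℤ) - m).natAbs then cZ m i else 0)
          * (if q < ((j:ℤ) - n).natAbs then cZ n j else 0) := by
        refine Finset.sum_congr rfl fun i _ => ?_
        rw [Finset.sum_comm]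
    _ = ∑ q ∈ range N, ∑ i ∈ range (2*m+1), ∑ j ∈ range (2*n+1),
          (2*(q:ℤ)+1) * (if q < ((i:ℤ) - m).natAbs then cZ m i else 0)
          * (if q < ((j:ℤ) - n).natAbs then cZ n j else 0) := by
        rw [Finset.sum_comm]
    _ = 4 * Qsum m n := by
        unfold Qsum
        rw [Finset.mul_sum]
        refine Finset.sum_congr rfl fun q _ => ?_
        have hprod := Finset.sum_mul_sum (range (2*m+1)) (range (2*n+1))
          (fun i => if q < ((i:ℤ) - m).natAbs then cZ m i else 0)
          (fun j => if q < ((j:ℤ) - n).natAbs then cZ n j else 0)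
        calc ∑ i ∈ range (2*m+1), ∑ j ∈ range (2*n+1),
              (2*(q:ℤ)+1) * (if q < ((i:ℤ) - m).natAbs then cZ m i else 0)
              * (if q < ((j:ℤ) - n).natAbs then cZ n j else 0)
            = (2*(q:ℤ)+1) * ∑ i ∈ range (2*m+1), ∑ j ∈ range (2*n+1),
              (if q < ((i:ℤ) - m).natAbs then cZ m i else 0)
              * (if q < ((j:ℤ) - n).natAbs then cZ n j else 0) := by
              rw [Finset.mul_sum]
              refine Finset.sum_congr rfl fun i _ => ?_
              rw [Finset.mul_sum]
              refine Finset.sum_congr rfl fun j _ => ?_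
              ring
          _ = (2*(q:ℤ)+1) * ((∑ i ∈ range (2*m+1), (if q < ((i:ℤ) - m).natAbs then cZ m i else 0))
              * (∑ j ∈ range (2*n+1), (if q < ((j:ℤ) - n).natAbs then cZ n j else 0))) := by
              rw [← hprod]
          _ = 4 * ((2*(q:ℤ)+1) * Tt m (q+1) * Tt n (q+1)) := by
              rw [ind_row, ind_row]; ring

lemma centralBinom_cZ (m : ℕ) : cZ m m = (m.centralBinom : ℤ) := by
  unfold cZ Nat.centralBinom
  norm_num

lemma cZ_pos (m : ℕ) : 0 < cZ m m := by
  rw [centralBinom_cZ]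
  exact_mod_cast m.centralBinom_pos

/-- P2 with the m factor cancelled -/
lemma P2' (m : ℕ) :
    8 * ∑ p ∈ range m, (2*(p:ℤ)+1) * (Tt m (p+1))^2
      = (m:ℤ) * 16^m - 2*((m:ℤ)*cZ m m)^2 := by
  rcases Nat.eq_zero_or_pos m with h | h
  · subst h; simp
  · have hm : (m:ℤ) ≠ 0 := by exact_mod_cast h.ne'
    apply mul_left_cancel₀ hm
    have := P2 m
    linear_combination this

lemma P2ext (m N : ℕ) (h : m ≤ N) :
    8 * ∑ p ∈ range N, (2*(p:ℤ)+1) * (Tt m (p+1))^2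
      = (m:ℤ) * 16^m - 2*((m:ℤ)*cZ m m)^2 := by
  rw [← P2' m]
  congr 1
  apply (Finset.sum_subset (Finset.range_subset_range.2 h) ?_).symm
  intro q _ hq
  simp only [mem_range, not_lt] at hq
  rw [Tt_eq_zero (by omega)]
  ring

/-- the integral identity -/
lemma core (m n : ℕ) :
    2 * Ssum m n = ((m:ℤ)+n) * (4^m * 4^n) - 16 * Qsum m n := by
  have inner : ∀ i ∈ range (2*m+1),
      ∑ j ∈ range (2*n+1), cZ m i * cZ n j * |((i:ℤ)-m)^2 - ((j:ℤ)-n)^2|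
      = (cZ m i * ((i:ℤ)-m)^2) * 4^n
        + cZ m i * (∑ j ∈ range (2*n+1), cZ n j * ((j:ℤ)-n)^2)
        - 2 * ∑ j ∈ range (2*n+1), cZ m i * cZ n j * min (((i:ℤ)-m)^2) (((j:ℤ)-n)^2) := by
    intro i hi
    have hpt : ∀ j ∈ range (2*n+1), cZ m i * cZ n j * |((i:ℤ)-m)^2 - ((j:ℤ)-n)^2|
        = (cZ m i * ((i:ℤ)-m)^2) * cZ n j + cZ m i * (cZ n j * ((j:ℤ)-n)^2)
          - 2 * (cZ m i * cZ n j * min (((i:ℤ)-m)^2) (((j:ℤ)-n)^2)) := by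
      intro j _
      rw [abs_sq_diff]
      ring
    rw [Finset.sum_congr rfl hpt, Finset.sum_sub_distrib, Finset.sum_add_distrib,
      ← Finset.mul_sum, ← Finset.mul_sum, ← Finset.mul_sum, row_sum n]
  have key : Ssum m n
      = (∑ i ∈ range (2*m+1), cZ m i * ((i:ℤ)-m)^2) * 4^n
        + 4^m * (∑ j ∈ range (2*n+1), cZ n j * ((j:ℤ)-n)^2)
        - 2 * (4 * Qsum m n) := by
    unfold Ssum
    rw [Finset.sum_congr rfl inner, Finset.sum_sub_distrib, Finset.sum_add_distrib,
      ← Finset.sum_mul, ← Finset.sum_mul, ← Finset.mul_sum, row_sum m, tmin m n]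
  have h1 := mom2 m
  have h2 := mom2 n
  rw [key]
  linear_combination (4:ℤ)^n * h1 + (4:ℤ)^m * h2

/-- the sum-of-squares master identity -/
lemma master (m n : ℕ) :
    2 * (4^m * 4^n) * Ssum m n - 4*(m:ℤ)*n*cZ m m*cZ n n*(4^m * 4^n)
      = 2*((m:ℤ)*cZ m m*4^n - (n:ℤ)*cZ n n*4^m)^2
        + ∑ q ∈ range (max m n),
            2*(2*(q:ℤ)+1) * (2*Tt m (q+1)*4^n - 2*Tt n (q+1)*4^m)^2 := by
  have hsplit : ∑ q ∈ range (max m n),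
      2*(2*(q:ℤ)+1) * (2*Tt m (q+1)*4^n - 2*Tt n (q+1)*4^m)^2
      = ∑ q ∈ range (max m n),
        (((4:ℤ)^n*4^n*8) * ((2*(q:ℤ)+1) * (Tt m (q+1))^2)
          + ((4:ℤ)^m*4^m*8) * ((2*(q:ℤ)+1) * (Tt n (q+1))^2)
          - ((16:ℤ)*4^m*4^n) * ((2*(q:ℤ)+1) * Tt m (q+1) * Tt n (q+1))) := by
    refine Finset.sum_congr rfl fun q _ => ?_
    ring
  have hm := P2ext m (max m n) (le_max_left m n)
  have hn := P2ext n (max m n) (le_max_right m n)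
  have hc := core m n
  have h16m : (16:ℤ)^m = 4^m * 4^m := by
    rw [(by norm_num : (16:ℤ) = 4*4), mul_pow]
  have h16n : (16:ℤ)^n = 4^n * 4^n := by
    rw [(by norm_num : (16:ℤ) = 4*4), mul_pow]
  rw [h16m] at hm
  rw [h16n] at hn
  have hq : Qsum m n = ∑ q ∈ range (max m n), (2*(q:ℤ)+1) * Tt m (q+1) * Tt n (q+1) := rfl
  rw [hsplit, Finset.sum_sub_distrib, Finset.sum_add_distrib,
    ← Finset.mul_sum, ← Finset.mul_sum, ← Finset.mul_sum, ← hq]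
  linear_combination (4:ℤ)^m * 4^n * hc - ((4:ℤ)^n*4^n) * hm - ((4:ℤ)^m*4^m) * hn

/-- strict monotonicity of m ↦ m * centralBinom m / 4^m -/
lemma mono_nat {m n : ℕ} (h : m < n) :
    m * m.centralBinom * 4^n < n * n.centralBinom * 4^m := by
  induction n, h using Nat.le_induction with
  | base =>
    have h2 := Nat.succ_mul_centralBinom_succ m
    have h3 := m.centralBinom_pos
    have h4 : 0 < 4^m := Nat.pow_pos (by norm_num)
    calc m * m.centralBinom * 4^(m+1) = (4*m) * m.centralBinom * 4^m := by ring
      _ < (2*(2*m+1)) * m.centralBinom * 4^m :=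
          mul_lt_mul_of_pos_right (mul_lt_mul_of_pos_right (by omega) h3) h4
      _ = (m+1) * (m+1).centralBinom * 4^m := by rw [h2]
  | succ n hn ih =>
    have h2 := Nat.succ_mul_centralBinom_succ n
    have h3 : 0 < 4^m := Nat.pow_pos (by norm_num)
    calc m * m.centralBinom * 4^(n+1) = 4 * (m * m.centralBinom * 4^n) := by ring
      _ < 4 * (n * n.centralBinom * 4^m) := by omega
      _ ≤ (2*(2*n+1)) * n.centralBinom * 4^m := by
          calc 4 * (n * n.centralBinom * 4^m) = (4*n * n.centralBinom) * 4^m := by ring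
            _ ≤ (2*(2*n+1)) * n.centralBinom * 4^m :=
                mul_le_mul_left (mul_le_mul_left (by omega) _) _
      _ = (n+1) * (n+1).centralBinom * 4^m := by rw [h2]

lemma mono_int_lt {m n : ℕ} (hlt : m < n) :
    (m:ℤ)*cZ m m*4^n < (n:ℤ)*cZ n n*4^m := by
  rw [centralBinom_cZ, centralBinom_cZ]
  exact_mod_cast mono_nat hlt

lemma mono_int {m n : ℕ} (h : m ≠ n) :
    (m:ℤ)*cZ m m*4^n ≠ (n:ℤ)*cZ n n*4^m := by
  rcases Nat.lt_or_ge m n with hlt | hge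
  · exact ne_of_lt (mono_int_lt hlt)
  · exact ne_of_gt (mono_int_lt (lt_of_le_of_ne hge fun e => h e.symm))

lemma ichoose_eq_zero {m : ℕ} {k : ℤ} (h : k ∉ Finset.Icc (-(m:ℤ)) m) :
    ichoose (2*m) ((m:ℤ)+k) = 0 := by
  simp only [Finset.mem_Icc, not_and_or, not_le] at h
  unfold ichoose
  rcases h with h | h
  · rw [if_neg (by omega)]
  · rw [if_pos (by omega)]
    have : 2*m < ((m:ℤ)+k).toNat := by omega
    simp [Nat.choose_eq_zero_of_lt this]

/-- reduction of the double finsum to `Ssum` -/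
lemma finsum_eq_Ssum (m n : ℕ) :
    (∑ᶠ k : ℤ, ∑ᶠ l : ℤ,
        ichoose (2*m) (m+k) * ichoose (2*n) (n+l) * |k^2 - l^2|) = Ssum m n := by
  have inner_eq : ∀ k : ℤ, (∑ᶠ l : ℤ, ichoose (2*m) (m+k) * ichoose (2*n) (n+l) * |k^2 - l^2|)
      = ∑ l ∈ Finset.Icc (-(n:ℤ)) n, ichoose (2*m) (m+k) * ichoose (2*n) (n+l) * |k^2 - l^2| := by
    intro k
    apply finsum_eq_finset_sum_of_support_subset
    intro l hl
    simp only [Function.mem_support] at hl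
    by_contra hmem
    exact hl (by rw [ichoose_eq_zero hmem]; ring)
  have outer_eq : (∑ᶠ k : ℤ, ∑ᶠ l : ℤ,
        ichoose (2*m) (m+k) * ichoose (2*n) (n+l) * |k^2 - l^2|)
      = ∑ k ∈ Finset.Icc (-(m:ℤ)) m, ∑ l ∈ Finset.Icc (-(n:ℤ)) n,
          ichoose (2*m) (m+k) * ichoose (2*n) (n+l) * |k^2 - l^2| := by
    rw [finsum_congr inner_eq]
    apply finsum_eq_finset_sum_of_support_subset
    intro k hk
    simp only [Function.mem_support] at hk
    by_contra hmem
    apply hk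
    apply Finset.sum_eq_zero
    intro l _
    rw [ichoose_eq_zero hmem]
    ring
  rw [outer_eq]
  unfold Ssum
  refine Finset.sum_nbij' (fun k => (k + m).toNat) (fun i => (i:ℤ) - m) ?_ ?_ ?_ ?_ ?_
  · intro k hk; simp only [Finset.mem_Icc, mem_range] at *; omega
  · intro i hi; simp only [Finset.mem_Icc, mem_range] at *; omega
  · intro k hk; simp only [Finset.mem_Icc] at hk; beta_reduce; omega
  · intro i hi; simp only [mem_range] at hi; beta_reduce; omega
  · intro k hk
    simp only [Finset.mem_Icc] at hk
    have hik : ((((k + m).toNat : ℕ)):ℤ) = k + m := by omega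
    refine Finset.sum_nbij' (fun l => (l + n).toNat) (fun j => (j:ℤ) - n) ?_ ?_ ?_ ?_ ?_
    · intro l hl; simp only [Finset.mem_Icc, mem_range] at *; omega
    · intro j hj; simp only [Finset.mem_Icc, mem_range] at *; omega
    · intro l hl; simp only [Finset.mem_Icc] at hl; beta_reduce; omega
    · intro j hj; simp only [mem_range] at hj; beta_reduce; omega
    · intro l hl
      simp only [Finset.mem_Icc] at hl
      have hjl : ((((l + n).toNat : ℕ)):ℤ) = l + n := by omega
      have e1 : ichoose (2*m) (m+k) = cZ m ((k + m).toNat) := by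
        unfold ichoose cZ
        rw [add_comm (m:ℤ) k, if_pos (by omega)]
      have e2 : ichoose (2*n) (n+l) = cZ n ((l + n).toNat) := by
        unfold ichoose cZ
        rw [add_comm (n:ℤ) l, if_pos (by omega)]
      rw [e1, e2, hik, hjl]
      norm_num

theorem stmt4 (m n : ℕ) :
    (2 * m * n * ((2 * m).choose m : ℤ) * ((2 * n).choose n : ℤ)
        ≤ ∑ᶠ k : ℤ, ∑ᶠ l : ℤ,
            ichoose (2 * m) (m + k) * ichoose (2 * n) (n + l) * |k ^ 2 - l ^ 2|)
      ∧ ((∑ᶠ k : ℤ, ∑ᶠ l : ℤ,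
            ichoose (2 * m) (m + k) * ichoose (2 * n) (n + l) * |k ^ 2 - l ^ 2|)
          = 2 * m * n * ((2 * m).choose m : ℤ) * ((2 * n).choose n : ℤ) ↔ m = n) := by
  have hred : (∑ᶠ k : ℤ, ∑ᶠ l : ℤ,
      ichoose (2 * m) (m + k) * ichoose (2 * n) (n + l) * |k ^ 2 - l ^ 2|) = Ssum m n :=
    finsum_eq_Ssum m n
  have hcm : ((2 * m).choose m : ℤ) = cZ m m := rfl
  have hcn : ((2 * n).choose n : ℤ) = cZ n n := rfl
  have hmaster := master m n
  have hP : (0:ℤ) < 4^m * 4^n := by positivity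
  have hsum_nonneg : (0:ℤ) ≤ ∑ q ∈ range (max m n),
      2*(2*(q:ℤ)+1) * (2*Tt m (q+1)*4^n - 2*Tt n (q+1)*4^m)^2 := by
    apply Finset.sum_nonneg
    intro q _
    positivity
  have hsq_nonneg : (0:ℤ) ≤ 2*((m:ℤ)*cZ m m*4^n - (n:ℤ)*cZ n n*4^m)^2 := by positivity
  constructor
  · rw [hred, hcm, hcn]
    have h0 : 0 ≤ 2 * (4^m * 4^n) * Ssum m n - 4*(m:ℤ)*n*cZ m m*cZ n n*(4^m * 4^n) := by
      rw [hmaster]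
      linarith
    nlinarith [hP]
  · rw [hred, hcm, hcn]
    constructor
    · intro hEq
      have hzero : 2 * (4^m * 4^n) * Ssum m n - 4*(m:ℤ)*n*cZ m m*cZ n n*(4^m * 4^n) = 0 := by
        rw [hEq]; ring
      rw [hzero] at hmaster
      have hsq_zero : 2*((m:ℤ)*cZ m m*4^n - (n:ℤ)*cZ n n*4^m)^2 = 0 := by
        linarith
      have : (m:ℤ)*cZ m m*4^n - (n:ℤ)*cZ n n*4^m = 0 := by
        have hx2 : ((m:ℤ)*cZ m m*4^n - (n:ℤ)*cZ n n*4^m)^2 = 0 := by linarith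
        exact sq_eq_zero_iff.mp hx2
      by_contra hne
      exact mono_int hne (by linarith)
    · intro hEq
      subst hEq
      have hzero : ∑ q ∈ range (max m m),
          2*(2*(q:ℤ)+1) * (2*Tt m (q+1)*4^m - 2*Tt m (q+1)*4^m)^2 = 0 := by
        apply Finset.sum_eq_zero
        intro q _
        ring
      rw [hzero] at hmaster
      have hdiff : 2 * (4^m * 4^m) * Ssum m m - 4*(m:ℤ)*m*cZ m m*cZ m m*(4^m * 4^m) = 0 := by
        rw [hmaster]; ring
      have hfactor : 2 * (4^m * 4^m) * (Ssum m m - 2*(m:ℤ)*m*cZ m m*cZ m m) = 0 := by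
        linarith [hdiff]
      have h2P : (2:ℤ) * (4^m * 4^m) ≠ 0 := by positivity
      have := mul_eq_zero.mp hfactor
      rcases this with h | h
      · exact absurd h h2P
      · linarith
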